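/- arXiv:1711.05356 — 3 statements merged into one kernel-verified Lean document; each statement's English description precedes it below -/
import Mathlib

section
/- Let N = 2^n and let B ⊆ {0,...,N-1} be reciprocal (contains 0 and is downward closed under bitwise domination). Then for any two vectors u, v ∈ GF(2)^N that agree on all coordinates indexed by B^c, the vectors u·G_N and v·G_N agree on all coordinates indexed by B^c. (Assigning arbitrary values on the punctured-index coordinates does not affect the unpunctured coded bits.) -/
/-- The 2×2 Arikan kernel over GF(2). -/
def G2 : Matrix (Fin 2) (Fin 2) (ZMod 2) := !![1, 0; 1, 1]

/-- Entry `(i,j)` of the `n`-fold Kronecker power `G_2^{⊗n}` of the Arikan kernel,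
under the standard index identification `i = Σ_k b_k(i) 2^k`:
`(G_2^{⊗n})_{i,j} = ∏_k (G_2)_{b_k(i), b_k(j)}`. -/
def Gnat (n : ℕ) (i j : ℕ) : ZMod 2 :=
  ∏ k ∈ Finset.range n,
    G2 (if Nat.testBit i k then 1 else 0) (if Nat.testBit j k then 1 else 0)

/-- The matrix `G_N = G_2^{⊗n}` (with `N = 2^n`) over GF(2). -/
def GN (n : ℕ) : Matrix (Fin (2 ^ n)) (Fin (2 ^ n)) (ZMod 2) :=
  Matrix.of fun i j => Gnat n i.val j.val

/-- `Dom j i` : the binary expansion of `j` is bitwise dominated by that of `i`. -/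
def Dom (j i : ℕ) : Prop := ∀ k, Nat.testBit j k = true → Nat.testBit i k = true

/-- The bit-permutation map on `{0,...,2^n-1}` induced by a permutation `σ` of
the `n` bit positions: bit `k` of the output is bit `σ(k)` of the input. -/
def bperm (n : ℕ) (σ : Equiv.Perm (Fin n)) (i : ℕ) : ℕ :=
  ∑ k : Fin n, if Nat.testBit i (σ k) then 2 ^ (k : ℕ) else 0

lemma gnat_ne_zero_dom {n i j : ℕ} (hj : j < 2 ^ n) (h : Gnat n i j ≠ 0) :
    Dom j i := by
  intro k hk
  by_cases hkn : k < n
  · by_contra hik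
    apply h
    apply Finset.prod_eq_zero (Finset.mem_range.mpr hkn)
    simp only [hk, if_true, Bool.not_eq_true] at *
    rw [hik]
    simp [G2]
  · exfalso
    have : Nat.testBit j k = false :=
      Nat.testBit_lt_two_pow (lt_of_lt_of_le hj (Nat.pow_le_pow_right (by norm_num) (le_of_not_gt hkn)))
    simp [this] at hk

/-- for a reciprocal `B`, if two input vectors agree on all
coordinates indexed by `B^c`, then their encodings `u·G_N`, `v·G_N` agree on
all coordinates indexed by `B^c`. -/
theorem stmt_10 (n : ℕ) (B : Set (Fin (2 ^ n)))
    (h0 : (⟨0, Nat.two_pow_pos n⟩ : Fin (2 ^ n)) ∈ B)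
    (hdc : ∀ i ∈ B, ∀ j : Fin (2 ^ n), Dom j.val i.val → j ∈ B) :
    ∀ u v : Fin (2 ^ n) → ZMod 2, (∀ i, i ∉ B → u i = v i) →
      ∀ j : Fin (2 ^ n), j ∉ B →
        Matrix.vecMul u (GN n) j = Matrix.vecMul v (GN n) j := by
  intro u v huv j hj
  simp only [Matrix.vecMul, dotProduct]
  apply Finset.sum_congr rfl
  intro i _
  by_cases hg : GN n i j = 0
  · rw [hg, mul_zero, mul_zero]
  · have hdom : Dom j.val i.val := gnat_ne_zero_dom j.isLt hg
    have hiB : i ∉ B := fun hiB => hj (hdc i hiB j hdom)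
    rw [huv i hiB]
end

section
/- Let N = 2^n. The zero-location set of the quasi-uniform puncturing pattern, defined as the image of {0,...,N-N_p-1} under the bit-reversal permutation, is reciprocal: it contains 0 and is downward closed under bitwise domination. -/
lemma sum_pow_lt (n : ℕ) (f : ℕ → Bool) :
    (∑ k ∈ Finset.range n, if f k then 2 ^ k else 0) < 2 ^ n := by
  induction n with
  | zero => simp
  | succ n ih =>
    rw [Finset.sum_range_succ, pow_succ]
    have : (if f n then 2 ^ n else 0) ≤ 2 ^ n := by split <;> simp
    omega

lemma testBit_sum_pow (n : ℕ) (f : ℕ → Bool) (m : ℕ) :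
    (∑ k ∈ Finset.range n, if f k then 2 ^ k else 0).testBit m
      = (f m && decide (m < n)) := by
  induction n with
  | zero => simp
  | succ n ih =>
    rw [Finset.sum_range_succ]
    have hb : (∑ k ∈ Finset.range n, if f k then 2 ^ k else 0) < 2 ^ n :=
      sum_pow_lt n f
    have : (∑ k ∈ Finset.range n, if f k then 2 ^ k else 0)
        + (if f n then 2 ^ n else 0)
        = 2 ^ n * (f n).toNat + (∑ k ∈ Finset.range n, if f k then 2 ^ k else 0) := by
      cases f n <;> simp <;> omega
    rw [this, Nat.testBit_two_pow_mul_add _ hb]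
    rcases lt_trichotomy m n with h | h | h
    · simp [h, ih, Nat.lt_succ_of_lt h]
    · subst h
      simp only [lt_irrefl, if_false, Nat.sub_self]
      cases f m <;> simp
    · have h1 : ¬ m < n := by omega
      have h2 : (f n).toNat < 2 ^ (m - n) := by
        have := Nat.one_lt_two_pow_iff.mpr (show m - n ≠ 0 by omega)
        cases f n <;> simp <;> omega
      simp [h1, Nat.testBit_eq_false_of_lt h2, show ¬ m < n + 1 by omega]

lemma bperm_eq_sum (n : ℕ) (σ : Equiv.Perm (Fin n)) (i : ℕ) :
    bperm n σ i = ∑ k ∈ Finset.range n,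
      if (if h : k < n then Nat.testBit i (σ ⟨k, h⟩) else false) then 2 ^ k else 0 := by
  rw [bperm, Finset.sum_range]
  apply Finset.sum_congr rfl
  intro k _
  simp [k.isLt]

lemma testBit_bperm (n : ℕ) (σ : Equiv.Perm (Fin n)) (i m : ℕ) :
    (bperm n σ i).testBit m
      = ((if h : m < n then Nat.testBit i (σ ⟨m, h⟩) else false) && decide (m < n)) := by
  rw [bperm_eq_sum, testBit_sum_pow]

lemma bperm_lt (n : ℕ) (σ : Equiv.Perm (Fin n)) (i : ℕ) : bperm n σ i < 2 ^ n := by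
  rw [bperm_eq_sum]; exact sum_pow_lt n _

lemma testBit_bperm_rev (n : ℕ) (i m : ℕ) (hm : m < n) :
    (bperm n Fin.revPerm i).testBit m = Nat.testBit i (n - 1 - m) := by
  rw [testBit_bperm]
  have h2 : ((Fin.revPerm ⟨m, hm⟩ : Fin n) : ℕ) = n - 1 - m := by
    simp only [Fin.revPerm_apply, Fin.val_rev]
    omega
  have h3 : n - (m + 1) = n - 1 - m := by omega
  simp [hm, h2, h3]

lemma bperm_rev_involutive (n : ℕ) (i : ℕ) (hi : i < 2 ^ n) :
    bperm n Fin.revPerm (bperm n Fin.revPerm i) = i := by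
  apply Nat.eq_of_testBit_eq
  intro m
  by_cases hm : m < n
  · rw [testBit_bperm_rev n _ m hm, testBit_bperm_rev n i _ (by omega)]
    congr 1
    omega
  · rw [Nat.testBit_eq_false_of_lt (lt_of_lt_of_le (bperm_lt n _ _)
      (Nat.pow_le_pow_right (by norm_num) (by omega))),
      Nat.testBit_eq_false_of_lt (lt_of_lt_of_le hi
      (Nat.pow_le_pow_right (by norm_num) (by omega)))]

lemma dom_le {j i : ℕ} (h : Dom j i) : j ≤ i := by
  have hji : j &&& i = j := by
    apply Nat.eq_of_testBit_eq
    intro k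
    rw [Nat.testBit_and]
    cases hb : j.testBit k
    · simp
    · simp [h k hb]
  calc j = j &&& i := hji.symm
    _ ≤ i := Nat.and_le_right

/-- the zero-location set of the quasi-uniform puncturing pattern
(the image of `{0,...,N-N_p-1}` under the bit-reversal permutation) is
reciprocal: it contains `0` (assuming `N_p < N`) and is downward closed under
bitwise domination. -/
theorem stmt_13 (n Np : ℕ) (hNp : Np < 2 ^ n) :
    0 ∈ bperm n (Fin.revPerm) '' Set.Iio (2 ^ n - Np) ∧
    ∀ i ∈ bperm n (Fin.revPerm) '' Set.Iio (2 ^ n - Np), ∀ j, Dom j i →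
      j ∈ bperm n (Fin.revPerm) '' Set.Iio (2 ^ n - Np) := by
  constructor
  · exact ⟨0, by simpa using Nat.sub_pos_of_lt hNp, by simp [bperm]⟩
  · rintro i ⟨x, hx, rfl⟩ j hj
    set i := bperm n Fin.revPerm x with hi
    have hxlt : x < 2 ^ n := lt_of_lt_of_le hx (Nat.sub_le _ _)
    refine ⟨bperm n Fin.revPerm j, ?_, ?_⟩
    · have hdom : Dom (bperm n Fin.revPerm j) x := by
        intro m hm
        by_cases hmn : m < n
        · rw [testBit_bperm_rev n j m hmn] at hm
          have h1 : n - 1 - m < n := by omega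
          have h2 : n - 1 - (n - 1 - m) = m := by omega
          have := hj _ hm
          rw [hi, testBit_bperm_rev n x _ h1, h2] at this
          exact this
        · rw [testBit_bperm n Fin.revPerm j m] at hm
          simp [hmn] at hm
      exact lt_of_le_of_lt (dom_le hdom) hx
    · apply bperm_rev_involutive
      exact lt_of_le_of_lt (dom_le hj) (bperm_lt n _ x)
end

section
/- Let N = 2^n and let B ⊆ {0,...,N-1} be reciprocal with complement B^c of size N̄ = 2^{n̄}, and suppose G_N(B^c, B^c) = G_{N̄} (B is hierarchical). Then for any information set A ⊆ B^c and any two input vectors u, v ∈ GF(2)^N with u_i = v_i for all i ∈ B^c, the punctured codewords (coordinates of u·G_N and v·G_N indexed by B^c) are equal and are determined by the length-N̄ polar encoding of (u_i : i ∈ B^c) with generator G_{N̄}. -/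
lemma Gnat_eq_zero (n i j : ℕ) (hj : j < 2 ^ n) (h : ¬ Dom j i) : Gnat n i j = 0 := by
  simp only [Dom, not_forall] at h
  obtain ⟨k, hjk, hik⟩ := h
  have hkn : k < n := by
    by_contra hk
    have : j < 2 ^ k := lt_of_lt_of_le hj (Nat.pow_le_pow_right (by norm_num) (le_of_not_gt hk))
    rw [Nat.testBit_lt_two_pow this] at hjk
    exact Bool.noConfusion hjk
  refine Finset.prod_eq_zero (Finset.mem_range.mpr hkn) ?_
  rw [hjk, if_pos rfl]
  rw [if_neg (by simpa using hik)]
  simp [G2]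

/-- for a hierarchical reciprocal `B` (with `|B^c| = 2^n̄` and
`G_N(B^c,B^c) = G_N̄`, where the strictly monotone `e` enumerates `B^c` in
increasing order), for any information set `A ⊆ B^c` and any two input vectors
agreeing on `B^c`, the punctured codewords (coordinates of `u·G_N` indexed by
`B^c`) coincide and are given by the length-`N̄` polar encoding of
`(u_i : i ∈ B^c)` with generator `G_N̄`. -/
theorem stmt_16 (n nb : ℕ) (hn : nb < n) (B : Finset (Fin (2 ^ n)))
    (h0 : (⟨0, Nat.two_pow_pos n⟩ : Fin (2 ^ n)) ∈ B)
    (hdc : ∀ i ∈ B, ∀ j : Fin (2 ^ n), Dom j.val i.val → j ∈ B)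
    (hcard : Bᶜ.card = 2 ^ nb)
    (e : Fin (2 ^ nb) → Fin (2 ^ n)) (he : StrictMono e)
    (hrange : ∀ x : Fin (2 ^ n), x ∈ Bᶜ ↔ x ∈ Set.range e)
    (hsub : (GN n).submatrix e e = GN nb) :
    ∀ A : Set (Fin (2 ^ n)), (∀ a ∈ A, a ∈ Bᶜ) →
      ∀ u v : Fin (2 ^ n) → ZMod 2, (∀ i ∈ Bᶜ, u i = v i) →
        (∀ k, Matrix.vecMul u (GN n) (e k) = Matrix.vecMul v (GN n) (e k)) ∧
        (∀ k, Matrix.vecMul u (GN n) (e k) = Matrix.vecMul (u ∘ e) (GN nb) k) := by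
  intro A hA u v huv
  -- key vanishing fact
  have hzero : ∀ k : Fin (2 ^ nb), ∀ i ∈ B, GN n i (e k) = 0 := by
    intro k i hi
    apply Gnat_eq_zero _ _ _ (e k).isLt
    intro hdom
    have : e k ∈ B := hdc i hi (e k) hdom
    have : e k ∈ Bᶜ := (hrange (e k)).mpr ⟨k, rfl⟩
    simp_all
  have hsum : ∀ (w : Fin (2 ^ n) → ZMod 2) (k : Fin (2 ^ nb)),
      Matrix.vecMul w (GN n) (e k) = ∑ i ∈ Bᶜ, w i * GN n i (e k) := by
    intro w k
    rw [Matrix.vecMul, dotProduct]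
    rw [← Finset.sum_subset (Finset.subset_univ Bᶜ)]
    intro i _ hi
    rw [hzero k i (by simpa using hi), mul_zero]
  have hbij : ∀ (w : Fin (2 ^ n) → ZMod 2) (k : Fin (2 ^ nb)),
      ∑ i ∈ Bᶜ, w i * GN n i (e k) = ∑ m : Fin (2 ^ nb), w (e m) * GN nb m k := by
    intro w k
    rw [← hsub]
    refine (Finset.sum_bij (fun m _ => e m) ?_ ?_ ?_ ?_).symm
    · intro m _; exact (hrange (e m)).mpr ⟨m, rfl⟩
    · intro a _ b _ hab; exact he.injective hab
    · intro i hi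
      obtain ⟨m, hm⟩ := (hrange i).mp hi
      exact ⟨m, Finset.mem_univ _, hm⟩
    · intro m _; rfl
  constructor
  · intro k
    rw [hsum u k, hsum v k]
    exact Finset.sum_congr rfl fun i hi => by rw [huv i hi]
  · intro k
    rw [hsum u k, hbij u k, Matrix.vecMul, dotProduct]
    rfl
end
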